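/- If X is a Yetter-Drinfeld module and X' an anti-Yetter-Drinfeld module over H, then X⊗X' with diagonal H-action h(x⊗x') = h₍₁₎x ⊗ h₍₂₎x' and coaction ρ(x⊗x') = x₍₋₁₎x'₍₋₁₎ ⊗ x₍₀₎ ⊗ x'₍₀₎ is an anti-Yetter-Drinfeld module: ρ(h(x⊗x')) = h₍₁₎ x₍₋₁₎x'₍₋₁₎ S⁻¹(h₍₃₎) ⊗ h₍₂₎(x₍₀₎⊗x'₍₀₎). -/
import Mathlib


/- STATEMENT 15: If X is a Yetter-Drinfeld module and X' an anti-Yetter-Drinfeld module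
over H, then X⊗X' with the diagonal action h(x⊗x') = h₍₁₎x ⊗ h₍₂₎x' and the codiagonal
coaction ρ(x⊗x') = x₍₋₁₎x'₍₋₁₎ ⊗ x₍₀₎ ⊗ x'₍₀₎ is an anti-Yetter-Drinfeld module. -/

open TensorProduct

noncomputable section

variable (k : Type) [Field k] (H : Type) [Ring H] [HopfAlgebra k H]

def Delta2 : H →ₗ[k] (H ⊗[k] H) ⊗[k] H :=
  (TensorProduct.map Coalgebra.comul LinearMap.id) ∘ₗ Coalgebra.comul

variable {A B C : Type} [AddCommGroup A] [AddCommGroup B] [AddCommGroup C]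
  [Module k A] [Module k B] [Module k C]

def sw3 : (A ⊗[k] B) ⊗[k] C →ₗ[k] (A ⊗[k] C) ⊗[k] B :=
  (TensorProduct.assoc k A C B).symm.toLinearMap
    ∘ₗ (TensorProduct.map LinearMap.id (TensorProduct.comm k B C).toLinearMap)
    ∘ₗ (TensorProduct.assoc k A B C).toLinearMap

def twist (X : Type) [AddCommGroup X] [Module k X] (Sm : H →ₗ[k] H)
    (act : H ⊗[k] X →ₗ[k] X) : H ⊗[k] (H ⊗[k] X) →ₗ[k] H ⊗[k] X :=
  (TensorProduct.map (LinearMap.mul' k H) act)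
    ∘ₗ (TensorProduct.tensorTensorTensorComm k H H H X).toLinearMap
    ∘ₗ (TensorProduct.map
          ((TensorProduct.map (LinearMap.mul' k H) LinearMap.id) ∘ₗ sw3 k)
          (TensorProduct.map Sm LinearMap.id))
    ∘ₗ (TensorProduct.tensorTensorTensorComm k (H ⊗[k] H) H H X).toLinearMap
    ∘ₗ (TensorProduct.map (Delta2 k H) LinearMap.id)

def actMap (X : Type) [AddCommGroup X] [Module k X] [Module H X]
    [IsScalarTower k H X] [SMulCommClass H k X] : H ⊗[k] X →ₗ[k] X :=
  TensorProduct.lift (LinearMap.mk₂ k (fun (h : H) (x : X) => h • x)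
    (fun h h' x => add_smul h h' x)
    (fun c h x => smul_assoc c h x)
    (fun h x y => smul_add h x y)
    (fun c h x => smul_comm h c x))

variable (X X' : Type) [AddCommGroup X] [Module k X] [Module H X]
  [IsScalarTower k H X] [SMulCommClass H k X]
  [AddCommGroup X'] [Module k X'] [Module H X']
  [IsScalarTower k H X'] [SMulCommClass H k X']

/-- The diagonal action `h ⊗ (x ⊗ x') ↦ h₍₁₎x ⊗ h₍₂₎x'`. -/
def actT : H ⊗[k] (X ⊗[k] X') →ₗ[k] X ⊗[k] X' :=
  (TensorProduct.map (actMap k H X) (actMap k H X'))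
    ∘ₗ (TensorProduct.tensorTensorTensorComm k H H X X').toLinearMap
    ∘ₗ (TensorProduct.map Coalgebra.comul LinearMap.id)

/-- The codiagonal coaction `x ⊗ x' ↦ x₍₋₁₎x'₍₋₁₎ ⊗ (x₍₀₎ ⊗ x'₍₀₎)`. -/
def rhoT (rho : X →ₗ[k] H ⊗[k] X) (rho' : X' →ₗ[k] H ⊗[k] X') :
    X ⊗[k] X' →ₗ[k] H ⊗[k] (X ⊗[k] X') :=
  (TensorProduct.map (LinearMap.mul' k H) LinearMap.id)
    ∘ₗ (TensorProduct.tensorTensorTensorComm k H X H X').toLinearMap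
    ∘ₗ (TensorProduct.map rho rho')


-- ======================= auxiliary development =======================
set_option synthInstance.maxHeartbeats 1000000
set_option maxHeartbeats 4000000

section AuxDefs

variable {k H}

/-- `((u⊗v)⊗w) ↦ (u*a*Sm w) ⊗ v` -/
def W3aux (Sm : H →ₗ[k] H) (a : H) : (H ⊗[k] H) ⊗[k] H →ₗ[k] H ⊗[k] H :=
  (TensorProduct.map ((LinearMap.mul' k H) ∘ₗ
      TensorProduct.map (LinearMap.mulRight k a) Sm) LinearMap.id) ∘ₗ sw3 k

/-- `h ↦ h₁ a Sm(h₃) ⊗ h₂` -/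
def Ycal (Sm : H →ₗ[k] H) (a : H) : H →ₗ[k] H ⊗[k] H :=
  W3aux Sm a ∘ₗ Delta2 k H

/-- `p ↦ act (p ⊗ x)` -/
def aE {X : Type} [AddCommGroup X] [Module k X] (act : H ⊗[k] X →ₗ[k] X) (x : X) :
    H →ₗ[k] X := act ∘ₗ ((TensorProduct.mk k H X).flip x)

@[simp] lemma aE_apply {X : Type} [AddCommGroup X] [Module k X]
    (act : H ⊗[k] X →ₗ[k] X) (x : X) (p : H) : aE act x p = act (p ⊗ₜ[k] x) := rfl

lemma twist_pure {X : Type} [AddCommGroup X] [Module k X] (Sm : H →ₗ[k] H)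
    (act : H ⊗[k] X →ₗ[k] X) (g a : H) (x : X) :
    twist k H X Sm act (g ⊗ₜ[k] (a ⊗ₜ[k] x)) =
      LinearMap.lTensor H (aE act x) (Ycal Sm a g) := by
  rw [twist, Ycal]
  simp only [LinearMap.comp_apply, TensorProduct.map_tmul, LinearMap.id_coe, id_eq]
  generalize Delta2 k H g = t
  induction t using TensorProduct.induction_on with
  | zero => simp
  | add p q hp hq => simp only [TensorProduct.add_tmul, map_add, hp, hq]
  | tmul p c =>
    induction p using TensorProduct.induction_on with
    | zero => simp [TensorProduct.zero_tmul]
    | add u v hu hv => simp only [TensorProduct.add_tmul, map_add, hu, hv]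
    | tmul u v =>
      simp [W3aux, sw3, TensorProduct.tensorTensorTensorComm_tmul,
        LinearMap.mul'_apply, mul_assoc]

/-- `x ↦ x ⊗ 1 ⊗ 1` -/
def iota1 : H →ₗ[k] H ⊗[k] (H ⊗[k] H) :=
  (TensorProduct.mk k H (H ⊗[k] H)).flip ((1:H) ⊗ₜ[k] (1:H))

/-- `x ↦ 1 ⊗ x ⊗ 1` -/
def betam : H →ₗ[k] H ⊗[k] (H ⊗[k] H) :=
  (TensorProduct.mk k H (H ⊗[k] H) 1) ∘ₗ ((TensorProduct.mk k H H).flip 1)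

/-- `x ↦ 1 ⊗ 1 ⊗ x` -/
def betam' : H →ₗ[k] H ⊗[k] (H ⊗[k] H) :=
  (TensorProduct.mk k H (H ⊗[k] H) 1) ∘ₗ (TensorProduct.mk k H H 1)

def alpham (c : H) : H →ₗ[k] H ⊗[k] (H ⊗[k] H) := iota1 ∘ₗ LinearMap.mulRight k c

def gammam (Sm : H →ₗ[k] H) : H →ₗ[k] H ⊗[k] (H ⊗[k] H) := iota1 ∘ₗ Sm

def CEm (z : H ⊗[k] (H ⊗[k] H)) : H →ₗ[k] H ⊗[k] (H ⊗[k] H) :=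
  (LinearMap.toSpanSingleton k _ z) ∘ₗ (Coalgebra.counit (R := k) (A := H))

def conv (f g : H →ₗ[k] H ⊗[k] (H ⊗[k] H)) : H →ₗ[k] H ⊗[k] (H ⊗[k] H) :=
  LinearMap.mul' k (H ⊗[k] (H ⊗[k] H)) ∘ₗ TensorProduct.map f g ∘ₗ Coalgebra.comul

@[simp] lemma iota1_apply (x : H) : iota1 (k := k) x = x ⊗ₜ[k] ((1:H) ⊗ₜ[k] (1:H)) := rfl
@[simp] lemma betam_apply (x : H) : betam (k := k) x = (1:H) ⊗ₜ[k] (x ⊗ₜ[k] (1:H)) := rfl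
@[simp] lemma betam'_apply (x : H) : betam' (k := k) x = (1:H) ⊗ₜ[k] ((1:H) ⊗ₜ[k] x) := rfl
@[simp] lemma alpham_apply (c x : H) :
    alpham (k := k) c x = (x * c) ⊗ₜ[k] ((1:H) ⊗ₜ[k] (1:H)) := rfl
@[simp] lemma gammam_apply (Sm : H →ₗ[k] H) (x : H) :
    gammam Sm x = (Sm x) ⊗ₜ[k] ((1:H) ⊗ₜ[k] (1:H)) := rfl
@[simp] lemma CEm_apply (z : H ⊗[k] (H ⊗[k] H)) (x : H) :
    CEm z x = Coalgebra.counit (R := k) (A := H) x • z := rfl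

lemma conv_conv (f g h₃ : H →ₗ[k] H ⊗[k] (H ⊗[k] H)) :
    conv (conv f g) h₃ =
      LinearMap.mul' k (H ⊗[k] (H ⊗[k] H))
        ∘ₗ (TensorProduct.map (LinearMap.mul' k (H ⊗[k] (H ⊗[k] H))) LinearMap.id)
        ∘ₗ (TensorProduct.map (TensorProduct.map f g) h₃)
        ∘ₗ (TensorProduct.map Coalgebra.comul LinearMap.id) ∘ₗ Coalgebra.comul := by
  apply LinearMap.ext; intro x
  simp only [conv, LinearMap.comp_apply]
  generalize Coalgebra.comul (R := k) x = t
  induction t using TensorProduct.induction_on with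
  | zero => simp
  | add p q hp hq => simp only [map_add, hp, hq]
  | tmul p q => simp

lemma conv_expand_right (f g h₃ : H →ₗ[k] H ⊗[k] (H ⊗[k] H)) :
    conv f (conv g h₃) =
      LinearMap.mul' k (H ⊗[k] (H ⊗[k] H))
        ∘ₗ (TensorProduct.map LinearMap.id (LinearMap.mul' k (H ⊗[k] (H ⊗[k] H))))
        ∘ₗ (TensorProduct.map f (TensorProduct.map g h₃))
        ∘ₗ (TensorProduct.map LinearMap.id Coalgebra.comul) ∘ₗ Coalgebra.comul := by
  apply LinearMap.ext; intro x
  simp only [conv, LinearMap.comp_apply]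
  generalize Coalgebra.comul (R := k) x = t
  induction t using TensorProduct.induction_on with
  | zero => simp
  | add p q hp hq => simp only [map_add, hp, hq]
  | tmul p q => simp

lemma conv_assoc (f g h₃ : H →ₗ[k] H ⊗[k] (H ⊗[k] H)) :
    conv (conv f g) h₃ = conv f (conv g h₃) := by
  rw [conv_conv, conv_expand_right]
  apply LinearMap.ext; intro x
  simp only [LinearMap.comp_apply]
  have hco : (TensorProduct.map Coalgebra.comul LinearMap.id) (Coalgebra.comul (R := k) x)
      = (TensorProduct.assoc k H H H).symm
          ((TensorProduct.map LinearMap.id Coalgebra.comul) (Coalgebra.comul (R := k) x)) := by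
    exact (Coalgebra.coassoc_symm_apply (R := k) x).symm
  rw [hco]
  generalize (TensorProduct.map LinearMap.id Coalgebra.comul) (Coalgebra.comul (R := k) x) = t
  induction t using TensorProduct.induction_on with
  | zero => simp
  | add p q hp hq => simp only [map_add, hp, hq]
  | tmul p c =>
    induction c using TensorProduct.induction_on with
    | zero => simp [TensorProduct.tmul_zero]
    | add u v hu hv => simp only [TensorProduct.tmul_add, map_add, hu, hv]
    | tmul u v =>
      simp [TensorProduct.assoc_symm_tmul, LinearMap.mul'_apply, mul_assoc]

lemma conv_CE_left (z : H ⊗[k] (H ⊗[k] H)) (W : H →ₗ[k] H ⊗[k] (H ⊗[k] H)) :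
    conv (CEm z) W = LinearMap.mulLeft k z ∘ₗ W := by
  apply LinearMap.ext; intro x
  simp only [conv, LinearMap.comp_apply, LinearMap.mulLeft_apply]
  have h1 : (TensorProduct.map (CEm z) W) (Coalgebra.comul (R := k) x)
      = (TensorProduct.map (LinearMap.toSpanSingleton k _ z) W)
          ((LinearMap.rTensor H (Coalgebra.counit (R := k) (A := H)))
            (Coalgebra.comul (R := k) x)) := by
    generalize Coalgebra.comul (R := k) x = t
    induction t using TensorProduct.induction_on with
    | zero => simp
    | add p q hp hq => simp only [map_add, hp, hq]
    | tmul p q => simp [CEm, TensorProduct.smul_tmul', LinearMap.rTensor_tmul]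
  rw [h1, Coalgebra.rTensor_counit_comul (R := k) x]
  simp [LinearMap.mul'_apply]

lemma conv_anti (b : H) :
    conv (gammam (HopfAlgebra.antipode (R := k) (A := H))) (alpham b)
      = CEm (b ⊗ₜ[k] ((1:H) ⊗ₜ[k] (1:H))) := by
  apply LinearMap.ext; intro x
  simp only [conv, LinearMap.comp_apply, CEm_apply]
  have h1 : LinearMap.mul' k (H ⊗[k] (H ⊗[k] H))
        ((TensorProduct.map (gammam (HopfAlgebra.antipode (R := k) (A := H))) (alpham b))
          (Coalgebra.comul (R := k) x))
      = iota1 (LinearMap.mulRight k b (LinearMap.mul' k H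
          ((LinearMap.rTensor H (HopfAlgebra.antipode (R := k) (A := H)))
            (Coalgebra.comul (R := k) x)))) := by
    generalize Coalgebra.comul (R := k) x = t
    induction t using TensorProduct.induction_on with
    | zero => simp
    | add p q hp hq => simp only [map_add, hp, hq]
    | tmul p q =>
      simp [LinearMap.mul'_apply, LinearMap.rTensor_tmul,
        Algebra.TensorProduct.tmul_mul_tmul, mul_assoc]
  rw [h1, HopfAlgebra.mul_antipode_rTensor_comul_apply, Algebra.algebraMap_eq_smul_one]
  simp [smul_mul_assoc, TensorProduct.smul_tmul']

lemma comm1 (b : H) (W : H →ₗ[k] H ⊗[k] (H ⊗[k] H)) :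
    conv betam (LinearMap.mulLeft k (b ⊗ₜ[k] ((1:H) ⊗ₜ[k] (1:H))) ∘ₗ W)
      = LinearMap.mulLeft k (b ⊗ₜ[k] ((1:H) ⊗ₜ[k] (1:H))) ∘ₗ conv betam W := by
  apply LinearMap.ext; intro x
  simp only [conv, LinearMap.comp_apply, LinearMap.mulLeft_apply]
  generalize Coalgebra.comul (R := k) x = t
  induction t using TensorProduct.induction_on with
  | zero => simp
  | add p q hp hq => simp only [map_add, hp, hq, mul_add]
  | tmul p q =>
    simp only [TensorProduct.map_tmul, LinearMap.comp_apply, LinearMap.mulLeft_apply,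
      LinearMap.mul'_apply, betam_apply]
    generalize W q = e
    induction e using TensorProduct.induction_on with
    | zero => simp
    | add p' q' hp' hq' => simp only [mul_add, hp', hq']
    | tmul e1 f =>
      induction f using TensorProduct.induction_on with
      | zero => simp [TensorProduct.tmul_zero]
      | add u v hu hv => simp only [TensorProduct.tmul_add, mul_add, hu, hv]
      | tmul e2 e3 =>
        simp [Algebra.TensorProduct.tmul_mul_tmul, mul_assoc]

lemma comm2 (a b : H) (W : H →ₗ[k] H ⊗[k] (H ⊗[k] H)) :
    conv (alpham a) (LinearMap.mulLeft k (b ⊗ₜ[k] ((1:H) ⊗ₜ[k] (1:H))) ∘ₗ W)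
      = conv (alpham (a * b)) W := by
  apply LinearMap.ext; intro x
  simp only [conv, LinearMap.comp_apply, LinearMap.mulLeft_apply]
  generalize Coalgebra.comul (R := k) x = t
  induction t using TensorProduct.induction_on with
  | zero => simp
  | add p q hp hq => simp only [map_add, hp, hq]
  | tmul p q =>
    simp only [TensorProduct.map_tmul, LinearMap.comp_apply, LinearMap.mulLeft_apply,
      LinearMap.mul'_apply, alpham_apply]
    generalize W q = e
    induction e using TensorProduct.induction_on with
    | zero => simp
    | add p' q' hp' hq' => simp only [mul_add, hp', hq']
    | tmul e1 f =>
      induction f using TensorProduct.induction_on with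
      | zero => simp [TensorProduct.tmul_zero]
      | add u v hu hv => simp only [TensorProduct.tmul_add, mul_add, hu, hv]
      | tmul e2 e3 =>
        simp [Algebra.TensorProduct.tmul_mul_tmul, mul_assoc]

/-- `u ⊗ v ↦ u ⊗ (v ⊗ 1)` -/
def jmapL : H ⊗[k] H →ₗ[k] H ⊗[k] (H ⊗[k] H) :=
  TensorProduct.map LinearMap.id ((TensorProduct.mk k H H).flip 1)

/-- `u ⊗ v ↦ u ⊗ (1 ⊗ v)` -/
def jmapR : H ⊗[k] H →ₗ[k] H ⊗[k] (H ⊗[k] H) :=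
  TensorProduct.map LinearMap.id (TensorProduct.mk k H H 1)

/-- the H-only part of the Yetter-Drinfeld computation -/
def Lstar (S1 S2 : H →ₗ[k] H) (a b : H) : H →ₗ[k] H ⊗[k] (H ⊗[k] H) :=
  (TensorProduct.map (LinearMap.mul' k H) LinearMap.id)
    ∘ₗ (TensorProduct.tensorTensorTensorComm k H H H H).toLinearMap
    ∘ₗ (TensorProduct.map (Ycal S1 a) (Ycal S2 b)) ∘ₗ Coalgebra.comul

lemma jY_eq (S1 : H →ₗ[k] H) (a : H) :
    jmapL ∘ₗ Ycal S1 a = conv (conv (alpham a) betam) (gammam S1) := by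
  rw [conv_conv]
  apply LinearMap.ext; intro x
  simp only [Ycal, Delta2, LinearMap.comp_apply]
  generalize (TensorProduct.map (Coalgebra.comul (R := k) (A := H)) LinearMap.id)
    (Coalgebra.comul (R := k) x) = t
  induction t using TensorProduct.induction_on with
  | zero => simp
  | add p q hp hq => simp only [map_add, hp, hq]
  | tmul p w =>
    induction p using TensorProduct.induction_on with
    | zero => simp [TensorProduct.zero_tmul]
    | add u v hu hv => simp only [TensorProduct.add_tmul, map_add, hu, hv]
    | tmul u v =>
      simp [W3aux, sw3, jmapL, LinearMap.mul'_apply,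
        Algebra.TensorProduct.tmul_mul_tmul, mul_assoc]

lemma jY_eq' (S2 : H →ₗ[k] H) (b : H) :
    jmapR ∘ₗ Ycal S2 b = conv (conv (alpham b) betam') (gammam S2) := by
  rw [conv_conv]
  apply LinearMap.ext; intro x
  simp only [Ycal, Delta2, LinearMap.comp_apply]
  generalize (TensorProduct.map (Coalgebra.comul (R := k) (A := H)) LinearMap.id)
    (Coalgebra.comul (R := k) x) = t
  induction t using TensorProduct.induction_on with
  | zero => simp
  | add p q hp hq => simp only [map_add, hp, hq]
  | tmul p w =>
    induction p using TensorProduct.induction_on with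
    | zero => simp [TensorProduct.zero_tmul]
    | add u v hu hv => simp only [TensorProduct.add_tmul, map_add, hu, hv]
    | tmul u v =>
      simp [W3aux, sw3, jmapR, LinearMap.mul'_apply,
        Algebra.TensorProduct.tmul_mul_tmul, mul_assoc]

lemma Lstar_eq_conv (S1 S2 : H →ₗ[k] H) (a b : H) :
    Lstar S1 S2 a b = conv (jmapL ∘ₗ Ycal S1 a) (jmapR ∘ₗ Ycal S2 b) := by
  apply LinearMap.ext; intro x
  simp only [Lstar, conv, LinearMap.comp_apply]
  generalize Coalgebra.comul (R := k) x = t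
  induction t using TensorProduct.induction_on with
  | zero => simp
  | add p q hp hq => simp only [map_add, hp, hq]
  | tmul p q =>
    simp only [TensorProduct.map_tmul, LinearMap.comp_apply]
    generalize Ycal S1 a p = s
    generalize Ycal S2 b q = r
    induction s using TensorProduct.induction_on with
    | zero => simp [TensorProduct.zero_tmul]
    | add u v hu hv => simp only [TensorProduct.add_tmul, map_add, hu, hv, add_mul]
    | tmul u v =>
      induction r using TensorProduct.induction_on with
      | zero => simp [TensorProduct.tmul_zero]
      | add u' v' hu' hv' => simp only [TensorProduct.tmul_add, map_add, hu', hv', mul_add]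
      | tmul u' v' =>
        simp [jmapL, jmapR, TensorProduct.tensorTensorTensorComm_tmul,
          LinearMap.mul'_apply, Algebra.TensorProduct.tmul_mul_tmul]

lemma conv_beta_beta' :
    conv (betam (k := k) (H := H)) betam'
      = (TensorProduct.mk k H (H ⊗[k] H) 1) ∘ₗ Coalgebra.comul := by
  apply LinearMap.ext; intro x
  simp only [conv, LinearMap.comp_apply]
  generalize Coalgebra.comul (R := k) x = t
  induction t using TensorProduct.induction_on with
  | zero => simp
  | add p q hp hq => simp only [map_add, hp, hq, TensorProduct.tmul_add]
  | tmul p q =>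
    simp [LinearMap.mul'_apply, Algebra.TensorProduct.tmul_mul_tmul]

lemma SR1 (S2 : H →ₗ[k] H) (c : H) :
    (TensorProduct.map LinearMap.id Coalgebra.comul) ∘ₗ Ycal S2 c
      = conv (conv (alpham c) (conv betam betam')) (gammam S2) := by
  rw [conv_conv, conv_beta_beta']
  apply LinearMap.ext; intro x
  simp only [Ycal, Delta2, LinearMap.comp_apply]
  generalize (TensorProduct.map (Coalgebra.comul (R := k) (A := H)) LinearMap.id)
    (Coalgebra.comul (R := k) x) = t
  induction t using TensorProduct.induction_on with
  | zero => simp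
  | add p q hp hq => simp only [map_add, hp, hq]
  | tmul p w =>
    induction p using TensorProduct.induction_on with
    | zero => simp [TensorProduct.zero_tmul]
    | add u v hu hv => simp only [TensorProduct.add_tmul, map_add, hu, hv]
    | tmul u v =>
      simp only [W3aux, sw3, LinearMap.comp_apply, TensorProduct.assoc_tmul,
        TensorProduct.map_tmul, TensorProduct.comm_tmul, TensorProduct.assoc_symm_tmul,
        LinearMap.mul'_apply, LinearMap.id_coe, id_eq, LinearMap.mulRight_apply,
        TensorProduct.mk_apply, alpham_apply, gammam_apply, LinearEquiv.coe_coe]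
      generalize Coalgebra.comul (R := k) v = s
      induction s using TensorProduct.induction_on with
      | zero => simp [TensorProduct.tmul_zero]
      | add u' v' hu' hv' => simp only [TensorProduct.tmul_add, map_add, hu', hv', mul_add,
          add_mul, TensorProduct.add_tmul]
      | tmul s1 s2 =>
        simp [Algebra.TensorProduct.tmul_mul_tmul, mul_assoc]

lemma star_identity (Sinv : H →ₗ[k] H) (a b : H) :
    Lstar (HopfAlgebra.antipode (R := k) (A := H)) Sinv a b
      = (TensorProduct.map LinearMap.id Coalgebra.comul) ∘ₗ Ycal Sinv (a * b) := by
  rw [Lstar_eq_conv, jY_eq, jY_eq', SR1]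
  rw [conv_assoc (conv (alpham a) betam) (gammam _) _]
  rw [conv_assoc (alpham a) betam _]
  rw [conv_assoc (alpham b) betam' (gammam Sinv)]
  rw [← conv_assoc (gammam _) (alpham b) (conv betam' (gammam Sinv))]
  rw [conv_anti, conv_CE_left, comm1, comm2]
  rw [← conv_assoc betam betam' (gammam Sinv)]
  rw [← conv_assoc (alpham (a*b)) (conv betam betam') (gammam Sinv)]

end AuxDefs

section AuxAct

variable {k H}

lemma actMap_tmul {X : Type} [AddCommGroup X] [Module k X] [Module H X]
    [IsScalarTower k H X] [SMulCommClass H k X] (p : H) (x : X) :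
    actMap k H X (p ⊗ₜ[k] x) = p • x := rfl

variable {X X' : Type} [AddCommGroup X] [Module k X] [Module H X]
  [IsScalarTower k H X] [SMulCommClass H k X]
  [AddCommGroup X'] [Module k X'] [Module H X']
  [IsScalarTower k H X'] [SMulCommClass H k X']

lemma actT_pure (h : H) (x : X) (x' : X') :
    actT k H X X' (h ⊗ₜ[k] (x ⊗ₜ[k] x'))
      = (TensorProduct.map (aE (actMap k H X) x) (aE (actMap k H X') x'))
          (Coalgebra.comul (R := k) h) := by
  rw [actT]
  simp only [LinearMap.comp_apply, TensorProduct.map_tmul, LinearMap.id_coe, id_eq]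
  generalize Coalgebra.comul (R := k) h = t
  induction t using TensorProduct.induction_on with
  | zero => simp
  | add p q hp hq => simp only [TensorProduct.add_tmul, map_add, hp, hq]
  | tmul p q =>
    simp [TensorProduct.tensorTensorTensorComm_tmul]

end AuxAct
-- ===================== end auxiliary development =====================

theorem statement15
    (Sinv : H →ₗ[k] H)
    (hS1 : Sinv ∘ₗ HopfAlgebra.antipode (R := k) = LinearMap.id)
    (hS2 : HopfAlgebra.antipode (R := k) ∘ₗ Sinv = LinearMap.id)
    (rho : X →ₗ[k] H ⊗[k] X) (rho' : X' →ₗ[k] H ⊗[k] X')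
    -- `X` and `X'` are comodules:
    (hco : (TensorProduct.assoc k H H X).toLinearMap ∘ₗ
        (TensorProduct.map Coalgebra.comul LinearMap.id) ∘ₗ rho =
        (TensorProduct.map LinearMap.id rho) ∘ₗ rho)
    (hcu : (TensorProduct.lid k X).toLinearMap ∘ₗ
        (TensorProduct.map Coalgebra.counit LinearMap.id) ∘ₗ rho = LinearMap.id)
    (hco' : (TensorProduct.assoc k H H X').toLinearMap ∘ₗ
        (TensorProduct.map Coalgebra.comul LinearMap.id) ∘ₗ rho' =
        (TensorProduct.map LinearMap.id rho') ∘ₗ rho')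
    (hcu' : (TensorProduct.lid k X').toLinearMap ∘ₗ
        (TensorProduct.map Coalgebra.counit LinearMap.id) ∘ₗ rho' = LinearMap.id)
    -- `X` is a Yetter–Drinfeld module:
    (hYD : ∀ (h : H) (x : X), rho (h • x) =
        twist k H X (HopfAlgebra.antipode (R := k)) (actMap k H X) (h ⊗ₜ[k] rho x))
    -- `X'` is an anti-Yetter–Drinfeld module:
    (hAYD : ∀ (h : H) (x' : X'), rho' (h • x') =
        twist k H X' Sinv (actMap k H X') (h ⊗ₜ[k] rho' x')) :
    -- then `X ⊗ X'` is an anti-Yetter–Drinfeld module: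
    ∀ (h : H) (w : X ⊗[k] X'),
      rhoT k H X X' rho rho' (actT k H X X' (h ⊗ₜ[k] w)) =
        twist k H (X ⊗[k] X') Sinv (actT k H X X')
          (h ⊗ₜ[k] rhoT k H X X' rho rho' w) := by
  intro h w
  induction w using TensorProduct.induction_on with
  | zero => simp
  | add w1 w2 ih1 ih2 => simp only [TensorProduct.tmul_add, map_add, ih1, ih2]
  | tmul x x' =>
    have hrw1 : rho ∘ₗ (aE (actMap k H X) x)
        = twist k H X (HopfAlgebra.antipode (R := k)) (actMap k H X)
            ∘ₗ ((TensorProduct.mk k H (H ⊗[k] X)).flip (rho x)) := by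
      apply LinearMap.ext; intro p
      simp only [LinearMap.comp_apply, aE_apply, LinearMap.flip_apply, TensorProduct.mk_apply]
      rw [actMap_tmul, hYD p x]
    have hrw2 : rho' ∘ₗ (aE (actMap k H X') x')
        = twist k H X' Sinv (actMap k H X')
            ∘ₗ ((TensorProduct.mk k H (H ⊗[k] X')).flip (rho' x')) := by
      apply LinearMap.ext; intro p
      simp only [LinearMap.comp_apply, aE_apply, LinearMap.flip_apply, TensorProduct.mk_apply]
      rw [actMap_tmul, hAYD p x']
    have hL : rhoT k H X X' rho rho' (actT k H X X' (h ⊗ₜ[k] (x ⊗ₜ[k] x')))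
        = (TensorProduct.map (LinearMap.mul' k H) LinearMap.id)
            ((TensorProduct.tensorTensorTensorComm k H X H X')
              ((TensorProduct.map (rho ∘ₗ aE (actMap k H X) x)
                 (rho' ∘ₗ aE (actMap k H X') x'))
                (Coalgebra.comul (R := k) h))) := by
      rw [actT_pure]
      generalize Coalgebra.comul (R := k) h = t
      induction t using TensorProduct.induction_on with
      | zero => simp
      | add p q hp hq => simp only [map_add, hp, hq]
      | tmul p q => simp [rhoT]
    rw [hL, hrw1, hrw2]
    have hR : rhoT k H X X' rho rho' (x ⊗ₜ[k] x')
        = (TensorProduct.map (LinearMap.mul' k H) LinearMap.id)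
            ((TensorProduct.tensorTensorTensorComm k H X H X') (rho x ⊗ₜ[k] rho' x')) := by
      simp [rhoT]
    rw [hR]
    generalize rho x = u
    generalize rho' x' = v
    induction u using TensorProduct.induction_on with
    | zero =>
      simp [LinearMap.comp_zero, TensorProduct.map_zero_left, TensorProduct.zero_tmul,
        TensorProduct.tmul_zero]
    | add u1 u2 ihu1 ihu2 =>
      simp only [map_add, LinearMap.comp_add, TensorProduct.map_add_left,
        TensorProduct.add_tmul, TensorProduct.tmul_add, LinearMap.add_apply, ihu1, ihu2]
    | tmul a x0 =>
      induction v using TensorProduct.induction_on with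
      | zero =>
        simp [LinearMap.comp_zero, TensorProduct.map_zero_right, TensorProduct.zero_tmul,
          TensorProduct.tmul_zero]
      | add v1 v2 ihv1 ihv2 =>
        simp only [map_add, LinearMap.comp_add, TensorProduct.map_add_right,
          TensorProduct.add_tmul, TensorProduct.tmul_add, LinearMap.add_apply, ihv1, ihv2]
      | tmul b x0' =>
        have ht1 : twist k H X (HopfAlgebra.antipode (R := k)) (actMap k H X)
              ∘ₗ ((TensorProduct.mk k H (H ⊗[k] X)).flip (a ⊗ₜ[k] x0))
            = (LinearMap.lTensor H (aE (actMap k H X) x0))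
                ∘ₗ Ycal (HopfAlgebra.antipode (R := k) (A := H)) a := by
          apply LinearMap.ext; intro p
          simp only [LinearMap.comp_apply, LinearMap.flip_apply, TensorProduct.mk_apply]
          exact twist_pure _ _ p a x0
        have ht2 : twist k H X' Sinv (actMap k H X')
              ∘ₗ ((TensorProduct.mk k H (H ⊗[k] X')).flip (b ⊗ₜ[k] x0'))
            = (LinearMap.lTensor H (aE (actMap k H X') x0')) ∘ₗ Ycal Sinv b := by
          apply LinearMap.ext; intro p
          simp only [LinearMap.comp_apply, LinearMap.flip_apply, TensorProduct.mk_apply]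
          exact twist_pure _ _ p b x0'
        rw [ht1, ht2]
        have hRpure : (TensorProduct.map (LinearMap.mul' k H) LinearMap.id)
              ((TensorProduct.tensorTensorTensorComm k H X H X')
                ((a ⊗ₜ[k] x0) ⊗ₜ[k] (b ⊗ₜ[k] x0')))
            = (a * b) ⊗ₜ[k] (x0 ⊗ₜ[k] x0') := by
          simp [TensorProduct.tensorTensorTensorComm_tmul, LinearMap.mul'_apply]
        rw [hRpure, twist_pure Sinv (actT k H X X') h (a*b) (x0 ⊗ₜ[k] x0')]
        have hAE : aE (actT k H X X') (x0 ⊗ₜ[k] x0')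
            = (TensorProduct.map (aE (actMap k H X) x0) (aE (actMap k H X') x0'))
                ∘ₗ Coalgebra.comul := by
          apply LinearMap.ext; intro p
          simp only [aE_apply, LinearMap.comp_apply]
          exact actT_pure p x0 x0'
        rw [hAE]
        have hLK : (TensorProduct.map (LinearMap.mul' k H) LinearMap.id)
              ((TensorProduct.tensorTensorTensorComm k H X H X')
                ((TensorProduct.map
                  ((LinearMap.lTensor H (aE (actMap k H X) x0))
                    ∘ₗ Ycal (HopfAlgebra.antipode (R := k) (A := H)) a)
                  ((LinearMap.lTensor H (aE (actMap k H X') x0')) ∘ₗ Ycal Sinv b))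
                  (Coalgebra.comul (R := k) h)))
            = (LinearMap.lTensor H
                (TensorProduct.map (aE (actMap k H X) x0) (aE (actMap k H X') x0')))
                (Lstar (HopfAlgebra.antipode (R := k) (A := H)) Sinv a b h) := by
          simp only [Lstar, LinearMap.comp_apply]
          generalize Coalgebra.comul (R := k) h = t
          induction t using TensorProduct.induction_on with
          | zero => simp
          | add p q hp hq => simp only [map_add, hp, hq]
          | tmul p q =>
            simp only [TensorProduct.map_tmul, LinearMap.comp_apply]
            generalize Ycal (HopfAlgebra.antipode (R := k) (A := H)) a p = s
            generalize Ycal Sinv b q = r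
            induction s using TensorProduct.induction_on with
            | zero => simp [TensorProduct.zero_tmul]
            | add s1 s2 hs1 hs2 => simp only [TensorProduct.add_tmul, map_add, hs1, hs2]
            | tmul s1 s2 =>
              induction r using TensorProduct.induction_on with
              | zero => simp [TensorProduct.tmul_zero]
              | add r1 r2 hr1 hr2 => simp only [TensorProduct.tmul_add, map_add, hr1, hr2]
              | tmul r1 r2 =>
                simp [TensorProduct.tensorTensorTensorComm_tmul, LinearMap.mul'_apply]
        rw [hLK, LinearMap.congr_fun (star_identity (k := k) (H := H) Sinv a b) h]
        have hfin : (LinearMap.lTensor H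
              (TensorProduct.map (aE (actMap k H X) x0) (aE (actMap k H X') x0')))
              ((TensorProduct.map LinearMap.id Coalgebra.comul) (Ycal Sinv (a*b) h))
            = (LinearMap.lTensor H
                ((TensorProduct.map (aE (actMap k H X) x0) (aE (actMap k H X') x0'))
                  ∘ₗ Coalgebra.comul)) (Ycal Sinv (a*b) h) := by
          generalize Ycal Sinv (a*b) h = y
          induction y using TensorProduct.induction_on with
          | zero => simp
          | add y1 y2 hy1 hy2 => simp only [map_add, hy1, hy2]
          | tmul y1 y2 => simp
        simp only [LinearMap.comp_apply]
        exact hfin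

end
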